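/- arXiv:0807.2668 — 2 statements merged into one kernel-verified Lean document; each statement's English description precedes it below -/
import Mathlib

section
/- The Haar second-moment identity: ∫ (vec(U)vec(U)* ⊗ vec(U)vec(U)*) dμ(U) = (2/(d(d−1))) R_{Y1⊗Y2} ⊗ R_{X1⊗X2} + (2/(d(d+1))) S_{Y1⊗Y2} ⊗ S_{X1⊗X2}, with suitable reordering of tensor factors so that the left side lies in L(Y1 ⊗ X1 ⊗ Y2 ⊗ X2). -/
open Matrix MeasureTheory
open scoped Kronecker ComplexOrder

/-- vec(A): vec(|i⟩⟨j|) = |i⟩ ⊗ |j⟩. -/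
def vec {d : ℕ} (A : Matrix (Fin d) (Fin d) ℂ) : Fin d × Fin d → ℂ := fun p => A p.1 p.2

/-- The rank-one operator vec(A) vec(A)*. -/
noncomputable def outer {d : ℕ} (A : Matrix (Fin d) (Fin d) ℂ) :
    Matrix (Fin d × Fin d) (Fin d × Fin d) ℂ :=
  vecMulVec (_root_.vec A) (star (_root_.vec A))

/-- Choi–Jamiołkowski representation J(Φ) = Σ_{i,j} Φ(|i⟩⟨j|) ⊗ |i⟩⟨j|. -/
noncomputable def choi {d : ℕ} (Φ : Matrix (Fin d) (Fin d) ℂ → Matrix (Fin d) (Fin d) ℂ) :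
    Matrix (Fin d × Fin d) (Fin d × Fin d) ℂ :=
  ∑ i, ∑ j, (Φ (Matrix.single i j 1)) ⊗ₖ (Matrix.single i j 1)

/-- Partial trace over the first (Y) tensor factor. -/
noncomputable def ptraceLeft {d : ℕ} (M : Matrix (Fin d × Fin d) (Fin d × Fin d) ℂ) :
    Matrix (Fin d) (Fin d) ℂ :=
  Matrix.of fun i j => ∑ k, M (k, i) (k, j)

/-- Partial trace over the second (X) tensor factor. -/
noncomputable def ptraceRight {d : ℕ} (M : Matrix (Fin d × Fin d) (Fin d × Fin d) ℂ) :
    Matrix (Fin d) (Fin d) ℂ :=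
  Matrix.of fun i j => ∑ k, M (i, k) (j, k)

/-- The swap operator W on Y ⊗ X. -/
def swapOp (d : ℕ) : Matrix (Fin d × Fin d) (Fin d × Fin d) ℂ :=
  Matrix.of fun p q => if p.1 = q.2 ∧ p.2 = q.1 then 1 else 0

/-- Antisymmetric projection R = (1 - W)/2. -/
noncomputable def projR (d : ℕ) : Matrix (Fin d × Fin d) (Fin d × Fin d) ℂ :=
  (2 : ℂ)⁻¹ • (1 - swapOp d)

/-- Symmetric projection S = (1 + W)/2. -/
noncomputable def projS (d : ℕ) : Matrix (Fin d × Fin d) (Fin d × Fin d) ℂ :=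
  (2 : ℂ)⁻¹ • (1 + swapOp d)

/-- Hilbert–Schmidt inner product ⟨A,B⟩ = Tr(A* B). -/
noncomputable def hsInner {n : Type*} [Fintype n] (A B : Matrix n n ℂ) : ℂ := (Aᴴ * B).trace

/-- Mixed-unitary channel: a finite convex combination of unitary conjugations. -/
def IsMixedUnitary {d : ℕ} (Φ : Matrix (Fin d) (Fin d) ℂ → Matrix (Fin d) (Fin d) ℂ) : Prop :=
  ∃ (N : ℕ) (p : Fin N → ℝ) (U : Fin N → Matrix.unitaryGroup (Fin d) ℂ),
    (∀ i, 0 ≤ p i) ∧ (∑ i, p i) = 1 ∧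
    ∀ X, Φ X = ∑ i, (p i : ℂ) •
      ((U i : Matrix (Fin d) (Fin d) ℂ) * X * star (U i : Matrix (Fin d) (Fin d) ℂ))

/-- Complete positivity: every extension 1_n ⊗ Φ maps PSD matrices to PSD matrices. -/
def IsCompletelyPositive {d : ℕ}
    (Φ : Matrix (Fin d) (Fin d) ℂ → Matrix (Fin d) (Fin d) ℂ) : Prop :=
  ∀ (n : ℕ) (M : Matrix (Fin n × Fin d) (Fin n × Fin d) ℂ), M.PosSemidef →
    (Matrix.of fun p q : Fin n × Fin d =>
      Φ (Matrix.of fun i j => M (p.1, i) (q.1, j)) p.2 q.2).PosSemidef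

/-- The completely depolarizing channel Ω(X) = (Tr X / d) 1. -/
noncomputable def depol {d : ℕ} (X : Matrix (Fin d) (Fin d) ℂ) : Matrix (Fin d) (Fin d) ℂ :=
  (X.trace / (d : ℂ)) • 1

/-- The Borel σ-algebra on matrices (the product σ-algebra of the Borel σ-algebra on ℂ,
which coincides with the Borel σ-algebra of the product topology). -/
noncomputable instance {d : ℕ} : MeasurableSpace (Matrix (Fin d) (Fin d) ℂ) :=
  (inferInstance : MeasurableSpace (Fin d → Fin d → ℂ))

/-- The induced Borel σ-algebra on the unitary group U(d). -/
noncomputable instance {d : ℕ} : MeasurableSpace (Matrix.unitaryGroup (Fin d) ℂ) :=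
  Subtype.instMeasurableSpace


namespace Stmt9Aux

variable {d : ℕ}

abbrev UG (d : ℕ) := Matrix.unitaryGroup (Fin d) ℂ

lemma meas_entry (i j : Fin d) :
    Measurable fun U : UG d => (U : Matrix (Fin d) (Fin d) ℂ) i j :=
  (measurable_subtype_coe (α := Matrix (Fin d) (Fin d) ℂ) (p := fun x => x ∈ UG d)).eval.eval

lemma entry_bound (U : UG d) (i j : Fin d) :
    ‖(U : Matrix (Fin d) (Fin d) ℂ) i j‖ ≤ 1 := by
  have h : (star (U : Matrix (Fin d) (Fin d) ℂ) * U) j j = (1 : Matrix (Fin d) (Fin d) ℂ) j j := by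
    rw [U.2.1]
  rw [Matrix.mul_apply, Matrix.one_apply_eq] at h
  have h2 : ∀ k, (star (U : Matrix (Fin d) (Fin d) ℂ)) j k * (U : Matrix (Fin d) (Fin d) ℂ) k j
      = (Complex.normSq ((U : Matrix (Fin d) (Fin d) ℂ) k j) : ℂ) := by
    intro k
    rw [Matrix.star_apply, Complex.star_def, Complex.normSq_eq_conj_mul_self]
  rw [Finset.sum_congr rfl (fun k _ => h2 k)] at h
  have h3 : ∑ k, Complex.normSq ((U : Matrix (Fin d) (Fin d) ℂ) k j) = 1 := by
    have := congrArg Complex.re h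
    simpa [Complex.ofReal_sum] using this
  have h4 : Complex.normSq ((U : Matrix (Fin d) (Fin d) ℂ) i j) ≤ 1 := by
    rw [← h3]
    exact Finset.single_le_sum (f := fun k => Complex.normSq ((U : Matrix (Fin d) (Fin d) ℂ) k j))
      (fun k _ => Complex.normSq_nonneg _) (Finset.mem_univ i)
  have h5 : ‖(U : Matrix (Fin d) (Fin d) ℂ) i j‖ ^ 2 = Complex.normSq ((U : Matrix (Fin d) (Fin d) ℂ) i j) := by
    exact Complex.sq_norm _
  nlinarith [norm_nonneg ((U : Matrix (Fin d) (Fin d) ℂ) i j)]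

lemma measurable_mul_left (V : UG d) : Measurable fun U : UG d => V * U := by
  have h : Measurable fun U : UG d => ((V : Matrix (Fin d) (Fin d) ℂ) * U : Matrix (Fin d) (Fin d) ℂ) := by
    apply measurable_pi_lambda
    intro i
    apply measurable_pi_lambda
    intro j
    have : (fun U : UG d => ((V : Matrix (Fin d) (Fin d) ℂ) * U) i j)
        = fun U : UG d => ∑ k, (V : Matrix (Fin d) (Fin d) ℂ) i k * (U : Matrix (Fin d) (Fin d) ℂ) k j := by
      funext U; rw [Matrix.mul_apply]
    rw [this]
    exact Finset.measurable_sum _ fun k _ => (meas_entry k j).const_mul _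
  exact Measurable.subtype_mk h

end Stmt9Aux
namespace Stmt9Aux

noncomputable def mono4 (a1 a2 b1 b2 c1 c2 d1 d2 : Fin d) : UG d → ℂ :=
  fun U => (U : Matrix (Fin d) (Fin d) ℂ) a1 a2 * star ((U : Matrix (Fin d) (Fin d) ℂ) b1 b2) *
    ((U : Matrix (Fin d) (Fin d) ℂ) c1 c2 * star ((U : Matrix (Fin d) (Fin d) ℂ) d1 d2))

lemma mstar {f : UG d → ℂ} (hf : Measurable f) : Measurable fun U => star (f U) :=
  continuous_star.measurable.comp hf

lemma meas_mono4 (a1 a2 b1 b2 c1 c2 d1 d2 : Fin d) :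
    Measurable (mono4 (d := d) a1 a2 b1 b2 c1 c2 d1 d2) :=
  (((meas_entry a1 a2).mul (mstar (meas_entry b1 b2))).mul
    ((meas_entry c1 c2).mul (mstar (meas_entry d1 d2))))

lemma bound_mono4 (a1 a2 b1 b2 c1 c2 d1 d2 : Fin d) (U : UG d) :
    ‖mono4 a1 a2 b1 b2 c1 c2 d1 d2 U‖ ≤ 1 := by
  unfold mono4
  rw [norm_mul, norm_mul, norm_mul, norm_star, norm_star]
  have h := entry_bound U
  have n := fun i j => norm_nonneg ((U : Matrix (Fin d) (Fin d) ℂ) i j)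
  have hab : ‖(U : Matrix (Fin d) (Fin d) ℂ) a1 a2‖ * ‖(U : Matrix (Fin d) (Fin d) ℂ) b1 b2‖ ≤ 1 := by
    nlinarith [h a1 a2, h b1 b2, n a1 a2, n b1 b2]
  have hcd : ‖(U : Matrix (Fin d) (Fin d) ℂ) c1 c2‖ * ‖(U : Matrix (Fin d) (Fin d) ℂ) d1 d2‖ ≤ 1 := by
    nlinarith [h c1 c2, h d1 d2, n c1 c2, n d1 d2]
  nlinarith [hab, hcd, mul_nonneg (n a1 a2) (n b1 b2), mul_nonneg (n c1 c2) (n d1 d2)]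

variable (μ : Measure (UG d)) [IsProbabilityMeasure μ]

lemma integrable_mono4 (a1 a2 b1 b2 c1 c2 d1 d2 : Fin d) :
    Integrable (mono4 a1 a2 b1 b2 c1 c2 d1 d2) μ := by
  refine Integrable.mono' (integrable_const (1 : ℝ))
    (meas_mono4 a1 a2 b1 b2 c1 c2 d1 d2).aestronglyMeasurable
    (Filter.Eventually.of_forall fun U => bound_mono4 a1 a2 b1 b2 c1 c2 d1 d2 U)

/-- The fourth moment. -/
noncomputable def F (a1 a2 b1 b2 c1 c2 d1 d2 : Fin d) : ℂ :=
  ∫ U, mono4 a1 a2 b1 b2 c1 c2 d1 d2 U ∂μ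

lemma integral_inv (hinv : ∀ V : UG d, μ.map (fun U => V * U) = μ)
    (V : UG d) (f : UG d → ℂ) (hf : Measurable f) :
    ∫ U, f (V * U) ∂μ = ∫ U, f U ∂μ := by
  conv_rhs => rw [← hinv V]
  rw [integral_map (measurable_mul_left V).aemeasurable hf.aestronglyMeasurable]

/-- General invariance relation for the fourth moment. -/
lemma F_inv (hinv : ∀ V : UG d, μ.map (fun U => V * U) = μ)
    (V : UG d) (a1 a2 b1 b2 c1 c2 d1 d2 : Fin d) :
    F μ a1 a2 b1 b2 c1 c2 d1 d2 =
      ∑ k, ∑ l, ∑ m, ∑ n,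
        (V : Matrix (Fin d) (Fin d) ℂ) a1 n * star ((V : Matrix (Fin d) (Fin d) ℂ) b1 m) *
          ((V : Matrix (Fin d) (Fin d) ℂ) c1 l * star ((V : Matrix (Fin d) (Fin d) ℂ) d1 k)) *
          F μ n a2 m b2 l c2 k d2 := by
  have key : ∀ U : UG d, mono4 a1 a2 b1 b2 c1 c2 d1 d2 (V * U) =
      ∑ k, ∑ l, ∑ m, ∑ n,
        (V : Matrix (Fin d) (Fin d) ℂ) a1 n * star ((V : Matrix (Fin d) (Fin d) ℂ) b1 m) *
          ((V : Matrix (Fin d) (Fin d) ℂ) c1 l * star ((V : Matrix (Fin d) (Fin d) ℂ) d1 k)) *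
          mono4 n a2 m b2 l c2 k d2 U := by
    intro U
    unfold mono4
    have e : ∀ i j : Fin d, ((V * U : UG d) : Matrix (Fin d) (Fin d) ℂ) i j
        = ∑ k, (V : Matrix (Fin d) (Fin d) ℂ) i k * (U : Matrix (Fin d) (Fin d) ℂ) k j := by
      intro i j
      rw [Submonoid.coe_mul, Matrix.mul_apply]
    rw [e, e, e, e, star_sum, star_sum]
    simp only [Finset.sum_mul, Finset.mul_sum, star_mul']
    refine Finset.sum_congr rfl fun k _ => ?_
    refine Finset.sum_congr rfl fun l _ => ?_
    refine Finset.sum_congr rfl fun m _ => ?_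
    refine Finset.sum_congr rfl fun n _ => ?_
    ring
  have : F μ a1 a2 b1 b2 c1 c2 d1 d2
      = ∫ U, mono4 a1 a2 b1 b2 c1 c2 d1 d2 (V * U) ∂μ := by
    rw [integral_inv μ hinv V _ (meas_mono4 a1 a2 b1 b2 c1 c2 d1 d2)]
    rfl
  rw [this]
  simp only [key]
  rw [integral_finset_sum _ (fun k _ => by
    apply integrable_finset_sum; intro l _
    apply integrable_finset_sum; intro m _
    apply integrable_finset_sum; intro n _
    exact (integrable_mono4 μ n a2 m b2 l c2 k d2).const_mul _)]
  refine Finset.sum_congr rfl fun k _ => ?_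
  rw [integral_finset_sum _ (fun l _ => by
    apply integrable_finset_sum; intro m _
    apply integrable_finset_sum; intro n _
    exact (integrable_mono4 μ n a2 m b2 l c2 k d2).const_mul _)]
  refine Finset.sum_congr rfl fun l _ => ?_
  rw [integral_finset_sum _ (fun m _ => by
    apply integrable_finset_sum; intro n _
    exact (integrable_mono4 μ n a2 m b2 l c2 k d2).const_mul _)]
  refine Finset.sum_congr rfl fun m _ => ?_
  rw [integral_finset_sum _ (fun n _ =>
    (integrable_mono4 μ n a2 m b2 l c2 k d2).const_mul _)]
  refine Finset.sum_congr rfl fun n _ => ?_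
  rw [MeasureTheory.integral_const_mul]
  rfl

end Stmt9Aux
namespace Stmt9Aux
set_option linter.unusedSectionVars false

variable {d : ℕ}
variable (μ : Measure (UG d)) [IsProbabilityMeasure μ]

/-- Diagonal unitary from unimodular entries. -/
def diagU (z : Fin d → ℂ) (hz : ∀ k, z k * star (z k) = 1) : UG d :=
  ⟨Matrix.diagonal z, by
    rw [Matrix.mem_unitaryGroup_iff, Matrix.star_eq_conjTranspose, Matrix.diagonal_conjTranspose,
      Matrix.diagonal_mul_diagonal]
    convert Matrix.diagonal_one
    exact hz _⟩

/-- Permutation unitary. -/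
def permU (σ : Equiv.Perm (Fin d)) : UG d :=
  ⟨Matrix.of fun i j => if j = σ i then 1 else 0, by
    rw [Matrix.mem_unitaryGroup_iff]
    ext i j
    simp only [Matrix.mul_apply, Matrix.star_eq_conjTranspose, Matrix.conjTranspose_apply,
      Matrix.of_apply, apply_ite (star : ℂ → ℂ), star_one, star_zero, ite_mul, one_mul, zero_mul,
      Finset.sum_ite_eq', Finset.mem_univ, if_true]
    simp [Matrix.one_apply, EmbeddingLike.apply_eq_iff_eq, eq_comm]⟩

/-- Phase invariance for F, general form. -/
lemma F_phase_gen (hinv : ∀ V : UG d, μ.map (fun U => V * U) = μ)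
    (z : Fin d → ℂ) (hz : ∀ k, z k * star (z k) = 1)
    (a1 a2 b1 b2 c1 c2 d1 d2 : Fin d) :
    F μ a1 a2 b1 b2 c1 c2 d1 d2 =
      (z a1 * star (z b1) * (z c1 * star (z d1))) * F μ a1 a2 b1 b2 c1 c2 d1 d2 := by
  have h := F_inv μ hinv (diagU z hz) a1 a2 b1 b2 c1 c2 d1 d2
  have hcoe : ∀ i j : Fin d, ((diagU z hz : UG d) : Matrix (Fin d) (Fin d) ℂ) i j
      = if i = j then z i else 0 := by
    intro i j; simp [diagU, Matrix.diagonal_apply]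
  simp only [hcoe] at h
  conv_lhs => rw [h]
  simp only [apply_ite (star : ℂ → ℂ), star_zero, ite_mul, mul_ite, zero_mul, mul_zero,
    Finset.sum_ite_irrel, Finset.sum_const_zero, Finset.sum_ite_eq, Finset.mem_univ, if_true]

/-- Phase invariance for F. -/
lemma F_phase (hinv : ∀ V : UG d, μ.map (fun U => V * U) = μ)
    (s a1 a2 b1 b2 c1 c2 d1 d2 : Fin d) :
    F μ a1 a2 b1 b2 c1 c2 d1 d2 =
      ((if a1 = s then Complex.I else 1) * star (if b1 = s then Complex.I else 1) *
        ((if c1 = s then Complex.I else 1) * star (if d1 = s then Complex.I else 1))) *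
        F μ a1 a2 b1 b2 c1 c2 d1 d2 := by
  exact F_phase_gen μ hinv (fun k => if k = s then Complex.I else 1)
    (fun k => by by_cases h : k = s <;> simp [h, Complex.mul_conj, Complex.normSq_I])
    a1 a2 b1 b2 c1 c2 d1 d2

/-- Permutation invariance for F. -/
lemma F_perm (hinv : ∀ V : UG d, μ.map (fun U => V * U) = μ)
    (σ : Equiv.Perm (Fin d)) (a1 a2 b1 b2 c1 c2 d1 d2 : Fin d) :
    F μ a1 a2 b1 b2 c1 c2 d1 d2 = F μ (σ a1) a2 (σ b1) b2 (σ c1) c2 (σ d1) d2 := by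
  have h := F_inv μ hinv (permU σ) a1 a2 b1 b2 c1 c2 d1 d2
  have hcoe : ∀ i j : Fin d, ((permU σ : UG d) : Matrix (Fin d) (Fin d) ℂ) i j
      = if j = σ i then 1 else 0 := by
    intro i j; simp [permU]
  simp only [hcoe] at h
  conv_lhs => rw [h]
  simp only [apply_ite (star : ℂ → ℂ), star_zero, star_one, ite_mul, mul_ite, zero_mul, mul_zero,
    one_mul, mul_one, Finset.sum_ite_irrel, Finset.sum_const_zero, Finset.sum_ite_eq',
    Finset.mem_univ, if_true]

/- ### First moment -/

noncomputable def mono2 (a b a' b' : Fin d) : UG d → ℂ :=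
  fun U => (U : Matrix (Fin d) (Fin d) ℂ) a b * star ((U : Matrix (Fin d) (Fin d) ℂ) a' b')

lemma meas_mono2 (a b a' b' : Fin d) : Measurable (mono2 (d := d) a b a' b') :=
  (meas_entry a b).mul (mstar (meas_entry a' b'))

lemma integrable_mono2 (a b a' b' : Fin d) : Integrable (mono2 a b a' b') μ := by
  refine Integrable.mono' (integrable_const (1 : ℝ))
    (meas_mono2 a b a' b').aestronglyMeasurable
    (Filter.Eventually.of_forall fun U => ?_)
  unfold mono2
  rw [norm_mul, norm_star]
  have h := entry_bound U
  have n := fun i j => norm_nonneg ((U : Matrix (Fin d) (Fin d) ℂ) i j)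
  nlinarith [h a b, h a' b', n a b, n a' b']

noncomputable def G (a b a' b' : Fin d) : ℂ := ∫ U, mono2 a b a' b' U ∂μ

lemma G_inv (hinv : ∀ V : UG d, μ.map (fun U => V * U) = μ)
    (V : UG d) (a b a' b' : Fin d) :
    G μ a b a' b' = ∑ k, ∑ l,
      ((V : Matrix (Fin d) (Fin d) ℂ) a l * star ((V : Matrix (Fin d) (Fin d) ℂ) a' k)) *
        G μ l b k b' := by
  have key : ∀ U : UG d, mono2 a b a' b' (V * U) = ∑ k, ∑ l,
      ((V : Matrix (Fin d) (Fin d) ℂ) a l * star ((V : Matrix (Fin d) (Fin d) ℂ) a' k)) *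
        mono2 l b k b' U := by
    intro U
    unfold mono2
    have e : ∀ i j : Fin d, ((V * U : UG d) : Matrix (Fin d) (Fin d) ℂ) i j
        = ∑ k, (V : Matrix (Fin d) (Fin d) ℂ) i k * (U : Matrix (Fin d) (Fin d) ℂ) k j := by
      intro i j; rw [Submonoid.coe_mul, Matrix.mul_apply]
    rw [e, e, star_sum]
    simp only [Finset.sum_mul, Finset.mul_sum, star_mul']
    refine Finset.sum_congr rfl fun k _ => ?_
    refine Finset.sum_congr rfl fun l _ => ?_
    ring
  have h1 : G μ a b a' b' = ∫ U, mono2 a b a' b' (V * U) ∂μ := by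
    rw [integral_inv μ hinv V _ (meas_mono2 a b a' b')]; rfl
  rw [h1]
  simp only [key]
  rw [integral_finset_sum _ (fun k _ => by
    apply integrable_finset_sum; intro l _
    exact (integrable_mono2 μ l b k b').const_mul _)]
  refine Finset.sum_congr rfl fun k _ => ?_
  rw [integral_finset_sum _ (fun l _ => (integrable_mono2 μ l b k b').const_mul _)]
  refine Finset.sum_congr rfl fun l _ => ?_
  rw [MeasureTheory.integral_const_mul]
  rfl

lemma G_perm (hinv : ∀ V : UG d, μ.map (fun U => V * U) = μ)
    (σ : Equiv.Perm (Fin d)) (a b a' b' : Fin d) :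
    G μ a b a' b' = G μ (σ a) b (σ a') b' := by
  have h := G_inv μ hinv (permU σ) a b a' b'
  have hcoe : ∀ i j : Fin d, ((permU σ : UG d) : Matrix (Fin d) (Fin d) ℂ) i j
      = if j = σ i then 1 else 0 := by
    intro i j; simp [permU]
  simp only [hcoe] at h
  conv_lhs => rw [h]
  simp only [apply_ite (star : ℂ → ℂ), star_zero, star_one, ite_mul, mul_ite, zero_mul, mul_zero,
    one_mul, mul_one, Finset.sum_ite_irrel, Finset.sum_const_zero, Finset.sum_ite_eq',
    Finset.mem_univ, if_true]

/-- Contraction for the first moment. -/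
lemma G_contract (b b' : Fin d) :
    ∑ a, G μ a b a b' = if b' = b then 1 else 0 := by
  unfold G
  rw [← integral_finset_sum _ (fun a _ => integrable_mono2 μ a b a b')]
  have : ∀ U : UG d, ∑ a, mono2 a b a b' U = if b' = b then 1 else 0 := by
    intro U
    unfold mono2
    have h : (star (U : Matrix (Fin d) (Fin d) ℂ) * U) b' b
        = (1 : Matrix (Fin d) (Fin d) ℂ) b' b := by rw [U.2.1]
    rw [Matrix.mul_apply] at h
    have h2 : ∑ a, (U : Matrix (Fin d) (Fin d) ℂ) a b * star ((U : Matrix (Fin d) (Fin d) ℂ) a b')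
        = (1 : Matrix (Fin d) (Fin d) ℂ) b' b := by
      rw [← h]
      refine Finset.sum_congr rfl fun a _ => ?_
      rw [Matrix.star_apply]
      ring
    rw [h2, Matrix.one_apply]
  simp only [this]
  simp

/-- Value of the diagonal first moment. -/
lemma G_value (hinv : ∀ V : UG d, μ.map (fun U => V * U) = μ)
    (a b b' : Fin d) : G μ a b a b' = (if b' = b then 1 else 0) / d := by
  have hall : ∀ a' : Fin d, G μ a' b a' b' = G μ a b a b' := by
    intro a'
    rcases eq_or_ne a' a with rfl | h
    · rfl
    · rw [G_perm μ hinv (Equiv.swap a' a) a' b a' b']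
      simp [Equiv.swap_apply_left]
  have h := G_contract μ b b'
  rw [Finset.sum_congr rfl (fun a' _ => hall a')] at h
  rw [Finset.sum_const, Finset.card_univ, Fintype.card_fin] at h
  have hd : (d : ℂ) ≠ 0 :=
    Nat.cast_ne_zero.mpr (Fin.pos_iff_nonempty.mpr ⟨a⟩).ne'
  rw [nsmul_eq_mul] at h
  rw [eq_div_iff hd, mul_comm]
  exact h

end Stmt9Aux
namespace Stmt9Aux
set_option linter.unusedSectionVars false
set_option maxHeartbeats 1000000

variable {d : ℕ}
variable (μ : Measure (UG d)) [IsProbabilityMeasure μ]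

lemma sum2 {i0 i1 : Fin d} (h : i0 ≠ i1) (f : Fin d → ℂ)
    (hf : ∀ k, k ≠ i0 → k ≠ i1 → f k = 0) : ∑ k, f k = f i0 + f i1 := by
  rw [← Finset.sum_subset (Finset.subset_univ ({i0, i1} : Finset (Fin d)))
    (fun k _ hk => by
      simp only [Finset.mem_insert, Finset.mem_singleton] at hk
      push_neg at hk
      exact hf k hk.1 hk.2)]
  exact Finset.sum_pair h

noncomputable def rc : ℂ := ((Real.sqrt 2)⁻¹ : ℝ)

lemma rc_star : star rc = rc := by
  simp [rc, Complex.star_def, Complex.conj_ofReal]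

lemma rc_sq : rc * rc = 2⁻¹ := by
  have h : ((Real.sqrt 2)⁻¹ * (Real.sqrt 2)⁻¹ : ℝ) = 2⁻¹ := by
    rw [← mul_inv, Real.mul_self_sqrt (by norm_num)]
  calc rc * rc = (((Real.sqrt 2)⁻¹ * (Real.sqrt 2)⁻¹ : ℝ) : ℂ) := by push_cast [rc]; ring
    _ = 2⁻¹ := by rw [h]; push_cast; ring

noncomputable def rotM (i0 i1 : Fin d) : Matrix (Fin d) (Fin d) ℂ :=
  Matrix.of fun i j =>
    if i = i0 then (if j = i0 then rc else if j = i1 then rc else 0)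
    else if i = i1 then (if j = i0 then -rc else if j = i1 then rc else 0)
    else if j = i then 1 else 0

lemma rotM_row0 {i0 i1 : Fin d} (j : Fin d) :
    rotM i0 i1 i0 j = if j = i0 then rc else if j = i1 then rc else 0 := by
  simp [rotM]

lemma rotM_mem (i0 i1 : Fin d) (h : i0 ≠ i1) : rotM i0 i1 ∈ Matrix.unitaryGroup (Fin d) ℂ := by
  rw [Matrix.mem_unitaryGroup_iff]
  ext i j
  rw [Matrix.mul_apply, Matrix.one_apply]
  simp only [Matrix.star_eq_conjTranspose, Matrix.conjTranspose_apply]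
  by_cases hi0 : i = i0
  · rw [sum2 h _ (fun k hk0 hk1 => by simp [rotM, hi0, hk0, hk1])]
    by_cases hj0 : j = i0
    · simp [rotM, hi0, hj0, h, Ne.symm h, rc_star]
      linear_combination (2 : ℂ) * rc_sq
    · by_cases hj1 : j = i1
      · simp [rotM, hi0, hj1, h, Ne.symm h, rc_star]
      · simp [rotM, hi0, hj0, hj1, h, Ne.symm h, Ne.symm hj0, Ne.symm hj1,
          fun hh : i = j => hj0 (hh.symm.trans hi0)]
  · by_cases hi1 : i = i1
    · rw [sum2 h _ (fun k hk0 hk1 => by simp [rotM, hi0, hi1, hk0, hk1])]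
      by_cases hj0 : j = i0
      · simp [rotM, hi0, hi1, hj0, h, Ne.symm h, rc_star]
      · by_cases hj1 : j = i1
        · simp [rotM, hi0, hi1, hj1, h, Ne.symm h, rc_star]
          linear_combination (2 : ℂ) * rc_sq
        · simp [rotM, hi0, hi1, hj0, hj1, h, Ne.symm h, Ne.symm hj0, Ne.symm hj1,
            fun hh : i = j => hj1 (hh.symm.trans hi1)]
    · rw [Finset.sum_eq_single_of_mem i (Finset.mem_univ i)
        (fun k _ hk => by simp [rotM, hi0, hi1, hk])]
      by_cases hj0 : j = i0
      · simp [rotM, hi0, hi1, hj0, Ne.symm hi0, Ne.symm hi1, fun hh : i = j => hi0 (hh.trans hj0)]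
      · by_cases hj1 : j = i1
        · simp [rotM, hi0, hi1, hj1, Ne.symm hi0, Ne.symm hi1, fun hh : i = j => hi1 (hh.trans hj1)]
        · simp [rotM, hi0, hi1, hj0, hj1, Ne.symm hi0, Ne.symm hi1, Ne.symm hj0, Ne.symm hj1,
            apply_ite (starRingEnd ℂ)]

noncomputable def rotU (i0 i1 : Fin d) (h : i0 ≠ i1) : UG d := ⟨rotM i0 i1, rotM_mem i0 i1 h⟩

/-- Rotation invariance: the C pattern in terms of the 16 sub-patterns. -/
lemma F_rot (hinv : ∀ V : UG d, μ.map (fun U => V * U) = μ)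
    (i0 i1 : Fin d) (h : i0 ≠ i1) (a2 b2 c2 d2 : Fin d) :
    F μ i0 a2 i0 b2 i0 c2 i0 d2 =
      (4 : ℂ)⁻¹ * ∑ k, ∑ l, ∑ m, ∑ n,
        ((if n = i0 then (1:ℂ) else if n = i1 then 1 else 0) *
         (if m = i0 then (1:ℂ) else if m = i1 then 1 else 0) *
         ((if l = i0 then (1:ℂ) else if l = i1 then 1 else 0) *
          (if k = i0 then (1:ℂ) else if k = i1 then 1 else 0))) *
          F μ n a2 m b2 l c2 k d2 := by
  have hV := F_inv μ hinv (rotU i0 i1 h) i0 a2 i0 b2 i0 c2 i0 d2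
  rw [hV]
  rw [Finset.mul_sum]
  refine Finset.sum_congr rfl fun k _ => ?_
  rw [Finset.mul_sum]
  refine Finset.sum_congr rfl fun l _ => ?_
  rw [Finset.mul_sum]
  refine Finset.sum_congr rfl fun m _ => ?_
  rw [Finset.mul_sum]
  refine Finset.sum_congr rfl fun n _ => ?_
  have hrow : ∀ x : Fin d, ((rotU i0 i1 h : UG d) : Matrix (Fin d) (Fin d) ℂ) i0 x
      = rc * (if x = i0 then 1 else if x = i1 then 1 else 0) := by
    intro x
    show rotM i0 i1 i0 x = _
    rw [rotM_row0]
    split_ifs <;> ring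
  have hrowstar : ∀ x : Fin d, star (((rotU i0 i1 h : UG d) : Matrix (Fin d) (Fin d) ℂ) i0 x)
      = rc * (if x = i0 then 1 else if x = i1 then 1 else 0) := by
    intro x
    rw [hrow, star_mul', rc_star]
    split_ifs <;> simp [mul_comm]
  rw [hrow, hrowstar, hrow, hrowstar]
  have h4 : (4 : ℂ)⁻¹ = (rc * rc) * (rc * rc) := by rw [rc_sq]; norm_num
  rw [h4]
  ring

end Stmt9Aux
namespace Stmt9Aux
set_option linter.unusedSectionVars false
set_option maxHeartbeats 2000000

variable {d : ℕ}
variable (μ : Measure (UG d)) [IsProbabilityMeasure μ]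

lemma cancel_phase {c x : ℂ} (hc : c ≠ 1) (h : x = c * x) : x = 0 := by
  have h2 : (c - 1) * x = 0 := by linear_combination -h
  rcases mul_eq_zero.mp h2 with h3 | h3
  · exact absurd (by linear_combination h3) hc
  · exact h3

lemma I_ne_one : Complex.I ≠ 1 := by
  intro h
  have := congrArg Complex.im h
  simp at this

lemma neg_I_ne_one : -Complex.I ≠ 1 := by
  intro h
  have := congrArg Complex.im h
  simp at this

lemma neg_one_ne_one : (-1 : ℂ) ≠ 1 := by
  intro h
  have := congrArg Complex.re h
  norm_num at this

/-- Vanishing of mismatched fourth moments. -/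
lemma F_zero (hinv : ∀ V : UG d, μ.map (fun U => V * U) = μ)
    (a1 a2 b1 b2 c1 c2 d1 d2 : Fin d)
    (h1 : ¬(a1 = b1 ∧ c1 = d1)) (h2 : ¬(a1 = d1 ∧ c1 = b1)) :
    F μ a1 a2 b1 b2 c1 c2 d1 d2 = 0 := by
  by_cases hab : a1 = b1
  · have hcd : c1 ≠ d1 := fun hh => h1 ⟨hab, hh⟩
    refine cancel_phase ?_ (F_phase μ hinv c1 a1 a2 b1 b2 c1 c2 d1 d2)
    have hdc : ¬(d1 = c1) := fun hh => hcd hh.symm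
    by_cases hac : a1 = c1
    · have hbc : b1 = c1 := hab ▸ hac
      rw [if_pos hac, if_pos hbc, if_pos rfl, if_neg hdc]
      simp [Complex.star_def, Complex.conj_I]
      exact fun hh => I_ne_one (by linear_combination hh)
    · have hbc : ¬(b1 = c1) := fun hh => hac (hab.trans hh)
      rw [if_neg hac, if_neg hbc, if_pos rfl, if_neg hdc]
      simpa using I_ne_one
  · by_cases had : a1 = d1
    · have hcb : c1 ≠ b1 := fun hh => h2 ⟨had, hh⟩
      refine cancel_phase ?_ (F_phase μ hinv b1 a1 a2 b1 b2 c1 c2 d1 d2)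
      have hdb : ¬(d1 = b1) := fun hh => hab (had.trans hh)
      rw [if_neg hab, if_pos rfl, if_neg hcb, if_neg hdb]
      simpa [Complex.star_def, Complex.conj_I] using neg_I_ne_one
    · refine cancel_phase ?_ (F_phase μ hinv a1 a1 a2 b1 b2 c1 c2 d1 d2)
      have hba : ¬(b1 = a1) := fun hh => hab hh.symm
      have hda : ¬(d1 = a1) := fun hh => had hh.symm
      rw [if_pos rfl, if_neg hba, if_neg hda]
      by_cases hca : c1 = a1
      · rw [if_pos hca]
        simp only [star_one, mul_one]
        rw [Complex.I_mul_I]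
        exact neg_one_ne_one
      · rw [if_neg hca]
        simpa using I_ne_one

lemma perm_two {x y i0 i1 : Fin d} (hxy : x ≠ y) (h01 : i0 ≠ i1) :
    ∃ σ : Equiv.Perm (Fin d), σ x = i0 ∧ σ y = i1 := by
  set τ := Equiv.swap x i0 with hτ
  have hτx : τ x = i0 := Equiv.swap_apply_left x i0
  have hτy : τ y ≠ i0 := by
    rw [← hτx]
    intro hh
    exact hxy (τ.injective hh).symm
  refine ⟨τ.trans (Equiv.swap (τ y) i1), ?_, ?_⟩
  · rw [Equiv.trans_apply, hτx]
    exact Equiv.swap_apply_of_ne_of_ne (Ne.symm hτy) h01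
  · rw [Equiv.trans_apply]
    exact Equiv.swap_apply_left (τ y) i1

/-- Normal form for the A pattern. -/
lemma F_normA (hinv : ∀ V : UG d, μ.map (fun U => V * U) = μ) {i0 i1 : Fin d} (h01 : i0 ≠ i1)
    {a1 c1 : Fin d} (hac : a1 ≠ c1) (a2 b2 c2 d2 : Fin d) :
    F μ a1 a2 a1 b2 c1 c2 c1 d2 = F μ i0 a2 i0 b2 i1 c2 i1 d2 := by
  obtain ⟨σ, hx, hy⟩ := perm_two hac h01
  rw [F_perm μ hinv σ, hx, hy]

/-- Normal form for the B pattern. -/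
lemma F_normB (hinv : ∀ V : UG d, μ.map (fun U => V * U) = μ) {i0 i1 : Fin d} (h01 : i0 ≠ i1)
    {a1 c1 : Fin d} (hac : a1 ≠ c1) (a2 b2 c2 d2 : Fin d) :
    F μ a1 a2 c1 b2 c1 c2 a1 d2 = F μ i0 a2 i1 b2 i1 c2 i0 d2 := by
  obtain ⟨σ, hx, hy⟩ := perm_two hac h01
  rw [F_perm μ hinv σ, hx, hy]

/-- Normal form for the C pattern. -/
lemma F_normC (hinv : ∀ V : UG d, μ.map (fun U => V * U) = μ) (i0 : Fin d)
    (a1 : Fin d) (a2 b2 c2 d2 : Fin d) :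
    F μ a1 a2 a1 b2 a1 c2 a1 d2 = F μ i0 a2 i0 b2 i0 c2 i0 d2 := by
  rw [F_perm μ hinv (Equiv.swap a1 i0), Equiv.swap_apply_left]

/-- C = A + B from the rotation. -/
lemma F_C_eq (hinv : ∀ V : UG d, μ.map (fun U => V * U) = μ) {i0 i1 : Fin d} (h01 : i0 ≠ i1)
    (a2 b2 c2 d2 : Fin d) :
    F μ i0 a2 i0 b2 i0 c2 i0 d2 =
      F μ i0 a2 i0 b2 i1 c2 i1 d2 + F μ i0 a2 i1 b2 i1 c2 i0 d2 := by
  have h := F_rot μ hinv i0 i1 h01 a2 b2 c2 d2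
  rw [sum2 h01 _ (fun k hk0 hk1 => by simp [hk0, hk1])] at h
  rw [sum2 h01 _ (fun l hl0 hl1 => by simp [hl0, hl1]),
      sum2 h01 _ (fun l hl0 hl1 => by simp [hl0, hl1])] at h
  rw [sum2 h01 _ (fun m hm0 hm1 => by simp [hm0, hm1]),
      sum2 h01 _ (fun m hm0 hm1 => by simp [hm0, hm1]),
      sum2 h01 _ (fun m hm0 hm1 => by simp [hm0, hm1]),
      sum2 h01 _ (fun m hm0 hm1 => by simp [hm0, hm1])] at h
  rw [sum2 h01 _ (fun n hn0 hn1 => by simp [hn0, hn1]),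
      sum2 h01 _ (fun n hn0 hn1 => by simp [hn0, hn1]),
      sum2 h01 _ (fun n hn0 hn1 => by simp [hn0, hn1]),
      sum2 h01 _ (fun n hn0 hn1 => by simp [hn0, hn1]),
      sum2 h01 _ (fun n hn0 hn1 => by simp [hn0, hn1]),
      sum2 h01 _ (fun n hn0 hn1 => by simp [hn0, hn1]),
      sum2 h01 _ (fun n hn0 hn1 => by simp [hn0, hn1]),
      sum2 h01 _ (fun n hn0 hn1 => by simp [hn0, hn1])] at h
  simp [h01, Ne.symm h01] at h
  rw [F_zero μ hinv i0 a2 i0 b2 i0 c2 i1 d2 (by simp [h01, Ne.symm h01]) (by simp [h01, Ne.symm h01]),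
      F_zero μ hinv i0 a2 i0 b2 i1 c2 i0 d2 (by simp [h01, Ne.symm h01]) (by simp [h01, Ne.symm h01]),
      F_zero μ hinv i0 a2 i1 b2 i0 c2 i0 d2 (by simp [h01, Ne.symm h01]) (by simp [h01, Ne.symm h01]),
      F_zero μ hinv i0 a2 i1 b2 i0 c2 i1 d2 (by simp [h01, Ne.symm h01]) (by simp [h01, Ne.symm h01]),
      F_zero μ hinv i0 a2 i1 b2 i1 c2 i1 d2 (by simp [h01, Ne.symm h01]) (by simp [h01, Ne.symm h01]),
      F_zero μ hinv i1 a2 i0 b2 i0 c2 i0 d2 (by simp [h01, Ne.symm h01]) (by simp [h01, Ne.symm h01]),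
      F_zero μ hinv i1 a2 i0 b2 i1 c2 i0 d2 (by simp [h01, Ne.symm h01]) (by simp [h01, Ne.symm h01]),
      F_zero μ hinv i1 a2 i0 b2 i1 c2 i1 d2 (by simp [h01, Ne.symm h01]) (by simp [h01, Ne.symm h01]),
      F_zero μ hinv i1 a2 i1 b2 i0 c2 i1 d2 (by simp [h01, Ne.symm h01]) (by simp [h01, Ne.symm h01]),
      F_zero μ hinv i1 a2 i1 b2 i1 c2 i0 d2 (by simp [h01, Ne.symm h01]) (by simp [h01, Ne.symm h01])] at h
  rw [F_normC μ hinv i0 i1 a2 b2 c2 d2] at h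
  rw [F_normA μ hinv h01 (Ne.symm h01) a2 b2 c2 d2] at h
  rw [F_normB μ hinv h01 (Ne.symm h01) a2 b2 c2 d2] at h
  linear_combination 2 * h

end Stmt9Aux
namespace Stmt9Aux
set_option linter.unusedSectionVars false
set_option maxHeartbeats 2000000

variable {d : ℕ}
variable (μ : Measure (UG d)) [IsProbabilityMeasure μ]

/-- Contraction over the (a,b) rows. -/
lemma F_contract1 (hinv : ∀ V : UG d, μ.map (fun U => V * U) = μ)
    (c1 a2 b2 c2 d2 : Fin d) :
    ∑ a1, F μ a1 a2 a1 b2 c1 c2 c1 d2 =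
      (if b2 = a2 then 1 else 0) * ((if d2 = c2 then 1 else 0) / d) := by
  unfold F
  rw [← integral_finset_sum _ (fun a1 _ => integrable_mono4 μ a1 a2 a1 b2 c1 c2 c1 d2)]
  have key : ∀ U : UG d, ∑ a1, mono4 a1 a2 a1 b2 c1 c2 c1 d2 U
      = (if b2 = a2 then 1 else 0) * mono2 c1 c2 c1 d2 U := by
    intro U
    unfold mono4 mono2
    rw [← Finset.sum_mul]
    congr 1
    have h : (star (U : Matrix (Fin d) (Fin d) ℂ) * U) b2 a2
        = (1 : Matrix (Fin d) (Fin d) ℂ) b2 a2 := by rw [U.2.1]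
    rw [Matrix.mul_apply, Matrix.one_apply] at h
    rw [← h]
    refine Finset.sum_congr rfl fun a1 _ => ?_
    rw [Matrix.star_apply]
    ring
  simp only [key]
  rw [MeasureTheory.integral_const_mul]
  rw [show (∫ U, mono2 c1 c2 c1 d2 U ∂μ) = G μ c1 c2 c1 d2 from rfl,
    G_value μ hinv c1 c2 d2]

/-- Contraction over the (a,d) rows. -/
lemma F_contract2 (hinv : ∀ V : UG d, μ.map (fun U => V * U) = μ)
    (b1 a2 b2 c2 d2 : Fin d) :
    ∑ a1, F μ a1 a2 b1 b2 b1 c2 a1 d2 =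
      (if d2 = a2 then 1 else 0) * ((if b2 = c2 then 1 else 0) / d) := by
  unfold F
  rw [← integral_finset_sum _ (fun a1 _ => integrable_mono4 μ a1 a2 b1 b2 b1 c2 a1 d2)]
  have key : ∀ U : UG d, ∑ a1, mono4 a1 a2 b1 b2 b1 c2 a1 d2 U
      = (if d2 = a2 then 1 else 0) * mono2 b1 c2 b1 b2 U := by
    intro U
    unfold mono4 mono2
    have step : ∀ a1 : Fin d,
        (U : Matrix (Fin d) (Fin d) ℂ) a1 a2 * star ((U : Matrix (Fin d) (Fin d) ℂ) b1 b2) *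
          ((U : Matrix (Fin d) (Fin d) ℂ) b1 c2 * star ((U : Matrix (Fin d) (Fin d) ℂ) a1 d2))
        = ((U : Matrix (Fin d) (Fin d) ℂ) a1 a2 * star ((U : Matrix (Fin d) (Fin d) ℂ) a1 d2)) *
          ((U : Matrix (Fin d) (Fin d) ℂ) b1 c2 * star ((U : Matrix (Fin d) (Fin d) ℂ) b1 b2)) := by
      intro a1; ring
    rw [Finset.sum_congr rfl (fun a1 _ => step a1), ← Finset.sum_mul]
    congr 1
    have h : (star (U : Matrix (Fin d) (Fin d) ℂ) * U) d2 a2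
        = (1 : Matrix (Fin d) (Fin d) ℂ) d2 a2 := by rw [U.2.1]
    rw [Matrix.mul_apply, Matrix.one_apply] at h
    rw [← h]
    refine Finset.sum_congr rfl fun a1 _ => ?_
    rw [Matrix.star_apply]
    ring
  simp only [key]
  rw [MeasureTheory.integral_const_mul]
  rw [show (∫ U, mono2 b1 c2 b1 b2 U ∂μ) = G μ b1 c2 b1 b2 from rfl,
    G_value μ hinv b1 c2 b2]

lemma sum_ite_count (i1 : Fin d) (X Y : ℂ) :
    ∑ a1 : Fin d, (if a1 = i1 then X else Y) = (d : ℂ) * Y + (X - Y) := by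
  have h : ∀ a1 : Fin d, (if a1 = i1 then X else Y) = Y + (if a1 = i1 then X - Y else 0) := by
    intro a1; split_ifs <;> ring
  rw [Finset.sum_congr rfl (fun a1 _ => h a1), Finset.sum_add_distrib, Finset.sum_const,
    Finset.sum_ite_eq', Finset.card_univ, Fintype.card_fin]
  simp [nsmul_eq_mul]

/-- The A-coefficient. -/
noncomputable def Av (d : ℕ) (a2 b2 c2 d2 : Fin d) : ℂ :=
  ((d : ℂ) * (if a2 = b2 ∧ c2 = d2 then 1 else 0) - (if a2 = d2 ∧ c2 = b2 then 1 else 0)) /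
    ((d : ℂ) * ((d : ℂ) ^ 2 - 1))

/-- The B-coefficient. -/
noncomputable def Bv (d : ℕ) (a2 b2 c2 d2 : Fin d) : ℂ :=
  ((d : ℂ) * (if a2 = d2 ∧ c2 = b2 then 1 else 0) - (if a2 = b2 ∧ c2 = d2 then 1 else 0)) /
    ((d : ℂ) * ((d : ℂ) ^ 2 - 1))

lemma ite_prod_conj (x y z w : Fin d) (c : ℂ) :
    (if x = y then (1:ℂ) else 0) * ((if z = w then (1:ℂ) else 0) / c)
      = (if y = x ∧ w = z then 1 else 0) / c := by
  by_cases h1 : x = y <;> by_cases h2 : z = w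
  · simp [h1, h2]
  · simp [h1, Ne.symm h2]
    tauto
  · simp [h2, Ne.symm h1]
    tauto
  · simp [Ne.symm h1, Ne.symm h2]
    tauto

lemma F_values (hinv : ∀ V : UG d, μ.map (fun U => V * U) = μ) (hd : 1 < d)
    {i0 i1 : Fin d} (h01 : i0 ≠ i1) (a2 b2 c2 d2 : Fin d) :
    F μ i0 a2 i0 b2 i1 c2 i1 d2 = Av d a2 b2 c2 d2 ∧
    F μ i0 a2 i1 b2 i1 c2 i0 d2 = Bv d a2 b2 c2 d2 := by
  have hd0 : (d : ℂ) ≠ 0 := Nat.cast_ne_zero.mpr (by omega)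
  have hdsq : (d : ℂ) ^ 2 - 1 ≠ 0 := by
    intro hzero
    have h1 : ((d ^ 2 : ℕ) : ℂ) = 1 := by push_cast; linear_combination hzero
    have h2 : d ^ 2 = 1 := Nat.cast_eq_one.mp h1
    have h3 : 4 ≤ d ^ 2 := by nlinarith
    omega
  have hne : (d : ℂ) * ((d : ℂ) ^ 2 - 1) ≠ 0 := mul_ne_zero hd0 hdsq
  set A := F μ i0 a2 i0 b2 i1 c2 i1 d2 with hA
  set B := F μ i0 a2 i1 b2 i1 c2 i0 d2 with hB
  set C := F μ i0 a2 i0 b2 i0 c2 i0 d2 with hC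
  have hCeq : C = A + B := F_C_eq μ hinv h01 a2 b2 c2 d2
  -- first contraction
  have e1 : (d : ℂ) * A + (C - A) = (if a2 = b2 ∧ c2 = d2 then 1 else 0) / d := by
    have h := F_contract1 μ hinv i1 a2 b2 c2 d2
    rw [ite_prod_conj] at h
    have hterm : ∀ a1 : Fin d, F μ a1 a2 a1 b2 i1 c2 i1 d2 = if a1 = i1 then C else A := by
      intro a1
      by_cases ha : a1 = i1
      · rw [if_pos ha, ha, hC, F_normC μ hinv i0 i1 a2 b2 c2 d2]
      · rw [if_neg ha, hA, F_normA μ hinv h01 ha a2 b2 c2 d2]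
    rw [Finset.sum_congr rfl (fun a1 _ => hterm a1), sum_ite_count] at h
    linear_combination h
  -- second contraction
  have e2 : (d : ℂ) * B + (C - B) = (if a2 = d2 ∧ c2 = b2 then 1 else 0) / d := by
    have h := F_contract2 μ hinv i1 a2 b2 c2 d2
    rw [ite_prod_conj] at h
    have hterm : ∀ a1 : Fin d, F μ a1 a2 i1 b2 i1 c2 a1 d2 = if a1 = i1 then C else B := by
      intro a1
      by_cases ha : a1 = i1
      · rw [if_pos ha, ha, hC, F_normC μ hinv i0 i1 a2 b2 c2 d2]
      · rw [if_neg ha, hB, F_normB μ hinv h01 ha a2 b2 c2 d2]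
    rw [Finset.sum_congr rfl (fun a1 _ => hterm a1), sum_ite_count] at h
    linear_combination h
  -- clear denominators
  have e1' : (d : ℂ) * ((d : ℂ) * A + (C - A)) = (if a2 = b2 ∧ c2 = d2 then 1 else 0) := by
    rw [e1, mul_div_cancel₀ _ hd0]
  have e2' : (d : ℂ) * ((d : ℂ) * B + (C - B)) = (if a2 = d2 ∧ c2 = b2 then 1 else 0) := by
    rw [e2, mul_div_cancel₀ _ hd0]
  constructor
  · rw [Av, eq_div_iff hne]
    linear_combination (d : ℂ) * e1' - e2' - ((d : ℂ) ^ 2 - (d : ℂ)) * hCeq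
  · rw [Bv, eq_div_iff hne]
    linear_combination (d : ℂ) * e2' - e1' - ((d : ℂ) ^ 2 - (d : ℂ)) * hCeq

end Stmt9Aux
namespace Stmt9Aux
set_option linter.unusedSectionVars false
set_option maxHeartbeats 2000000

variable {d : ℕ}
variable (μ : Measure (UG d)) [IsProbabilityMeasure μ]

/-- Master formula for the fourth moment. -/
lemma F_master (hinv : ∀ V : UG d, μ.map (fun U => V * U) = μ) (hd : 1 < d)
    (a1 a2 b1 b2 c1 c2 d1 d2 : Fin d) :
    F μ a1 a2 b1 b2 c1 c2 d1 d2 =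
      (if a1 = b1 ∧ c1 = d1 then 1 else 0) * Av d a2 b2 c2 d2 +
      (if a1 = d1 ∧ c1 = b1 then 1 else 0) * Bv d a2 b2 c2 d2 := by
  have h01 : (⟨0, by omega⟩ : Fin d) ≠ (⟨1, by omega⟩ : Fin d) := by
    simp [Fin.ext_iff]
  obtain ⟨hAv, hBv⟩ := F_values μ hinv hd h01 a2 b2 c2 d2
  by_cases h1 : a1 = b1 ∧ c1 = d1
  · by_cases h2 : a1 = d1 ∧ c1 = b1
    · have hb : b1 = a1 := h1.1.symm
      have hcc : c1 = a1 := h2.2.trans hb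
      have hdd : d1 = a1 := h2.1.symm
      rw [if_pos h1, if_pos h2, one_mul, one_mul]
      rw [hb, hcc, hdd, F_normC μ hinv ⟨0, by omega⟩ a1 a2 b2 c2 d2,
        F_C_eq μ hinv h01 a2 b2 c2 d2, hAv, hBv]
    · have had : a1 ≠ d1 := fun hh => h2 ⟨hh, h1.2.trans (hh.symm.trans h1.1)⟩
      have hac : a1 ≠ c1 := fun hh => had (hh.trans h1.2)
      rw [if_pos h1, if_neg h2, one_mul, zero_mul, add_zero]
      rw [show b1 = a1 from h1.1.symm, show d1 = c1 from h1.2.symm]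
      rw [F_normA μ hinv h01 hac a2 b2 c2 d2, hAv]
  · by_cases h2 : a1 = d1 ∧ c1 = b1
    · have hac : a1 ≠ c1 := fun hh => h1 ⟨hh.trans h2.2, hh.symm.trans h2.1⟩
      rw [if_neg h1, if_pos h2, zero_mul, zero_add, one_mul]
      rw [show d1 = a1 from h2.1.symm, show b1 = c1 from h2.2.symm]
      rw [F_normB μ hinv h01 hac a2 b2 c2 d2, hBv]
    · rw [F_zero μ hinv a1 a2 b1 b2 c1 c2 d1 d2 h1 h2, if_neg h1, if_neg h2]
      ring

end Stmt9Aux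

set_option maxHeartbeats 2000000

theorem stmt9 (d : ℕ) (hd : 1 < d) (μ : Measure (Matrix.unitaryGroup (Fin d) ℂ)) [IsProbabilityMeasure μ]
    (hinv : ∀ V : Matrix.unitaryGroup (Fin d) ℂ, μ.map (fun U => V * U) = μ) :
    ∀ p q : (Fin d × Fin d) × (Fin d × Fin d),
      (∫ U, outer (U : Matrix (Fin d) (Fin d) ℂ) p.1 q.1 * outer (U : Matrix (Fin d) (Fin d) ℂ) p.2 q.2 ∂μ)
        = (2 / ((d : ℂ) * ((d : ℂ) - 1))) *
            (projR d (p.1.1, p.2.1) (q.1.1, q.2.1) * projR d (p.1.2, p.2.2) (q.1.2, q.2.2))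
        + (2 / ((d : ℂ) * ((d : ℂ) + 1))) *
            (projS d (p.1.1, p.2.1) (q.1.1, q.2.1) * projS d (p.1.2, p.2.2) (q.1.2, q.2.2)) := by
  intro p q
  obtain ⟨⟨a1, a2⟩, c1, c2⟩ := p
  obtain ⟨⟨b1, b2⟩, d1, d2⟩ := q
  have hd0 : (d : ℂ) ≠ 0 := Nat.cast_ne_zero.mpr (by omega)
  have hdm : (d : ℂ) - 1 ≠ 0 := by
    intro h
    have h1 : ((d : ℕ) : ℂ) = 1 := by linear_combination h
    have := Nat.cast_eq_one.mp h1
    omega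
  have hdp : (d : ℂ) + 1 ≠ 0 := by
    intro h
    have h1 : ((d : ℕ) : ℂ) = -1 := by linear_combination h
    have h2 := congrArg Complex.re h1
    simp at h2
    have := Nat.cast_nonneg (α := ℝ) d
    rw [h2] at this
    norm_num at this
  have hsq : (d : ℂ) ^ 2 - 1 ≠ 0 := by
    intro h
    exact (mul_ne_zero hdm hdp) (by linear_combination h)
  have hcube : -(d : ℂ) + (d : ℂ) ^ 3 ≠ 0 := by
    intro h
    exact (mul_ne_zero hd0 hsq) (by linear_combination h)
  have hL : (∫ U, outer (U : Matrix (Fin d) (Fin d) ℂ) (a1, a2) (b1, b2) *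
      outer (U : Matrix (Fin d) (Fin d) ℂ) (c1, c2) (d1, d2) ∂μ)
      = Stmt9Aux.F μ a1 a2 b1 b2 c1 c2 d1 d2 := by
    unfold Stmt9Aux.F
    refine integral_congr_ae (Filter.Eventually.of_forall fun U => ?_)
    simp [outer, _root_.vec, Matrix.vecMulVec_apply, Stmt9Aux.mono4, Pi.star_apply]
  dsimp only
  rw [hL, Stmt9Aux.F_master μ hinv hd a1 a2 b1 b2 c1 c2 d1 d2]
  unfold Stmt9Aux.Av Stmt9Aux.Bv projR projS swapOp
  simp only [Matrix.smul_apply, Matrix.sub_apply, Matrix.add_apply, Matrix.one_apply,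
    Matrix.of_apply, Prod.mk.injEq, smul_eq_mul]
  split_ifs <;> (try field_simp [hd0, hdm, hdp, hsq, hcube]) <;> (try ring)
end

section
/- If ν is a Borel probability measure on the unitary group U(X, Y) between d-dimensional spaces, then the channel Φ(X) = ∫ U X U* dν(U) can be written as a finite convex combination Φ(X) = Σ_{i=1}^N p_i U_i X U_i* of unitary conjugations, with N ≤ d⁴ − 2d² + 2. -/
open Matrix MeasureTheory
open scoped Kronecker ComplexOrder

namespace Stmt11Aux

/-! ### Hermitian submodule and its real dimension -/

noncomputable def herm (n : Type*) [Fintype n] : Submodule ℝ (n → n → ℂ) where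
  carrier := {M | ∀ i j, M j i = (starRingEnd ℂ) (M i j)}
  add_mem' := fun {a b} ha hb i j => by simp [ha i j, hb i j]
  zero_mem' := by simp
  smul_mem' := fun r M hM i j => by
    simp [Pi.smul_apply, hM i j, Complex.real_smul, _root_.map_mul, Complex.conj_ofReal]

variable {n : Type*} [Fintype n]

lemma herm_diag_conj {A : n → n → ℂ} (hA : A ∈ herm n) :
    (starRingEnd ℂ) (∑ i, A i i) = ∑ i, A i i := by
  rw [map_sum]
  exact Finset.sum_congr rfl fun i _ => (hA i i).symm

/-- multiplication by I as a real-linear map -/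
def mulI (n : Type*) [Fintype n] : (n → n → ℂ) →ₗ[ℝ] (n → n → ℂ) where
  toFun M := Complex.I • M
  map_add' a b := smul_add _ _ _
  map_smul' r M := smul_comm _ _ _

lemma mulI_inj : Function.Injective (mulI n) := by
  intro a b h
  have : (-Complex.I) • (Complex.I • a) = (-Complex.I) • (Complex.I • b) := by
    show (-Complex.I) • (mulI n a) = (-Complex.I) • (mulI n b); rw [h]
  simpa [smul_smul, Complex.I_mul_I] using this

lemma herm_sup_mulI : herm n ⊔ (herm n).map (mulI n) = ⊤ := by
  rw [Submodule.eq_top_iff']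
  intro M
  rw [Submodule.mem_sup]
  refine ⟨fun i j => (M i j + (starRingEnd ℂ) (M j i)) / 2, fun i j => by
      simp only [map_div₀, map_add, Complex.conj_conj, map_ofNat]
      ring, ?_⟩
  refine ⟨mulI n (fun i j => (M i j - (starRingEnd ℂ) (M j i)) / (2 * Complex.I)),
    Submodule.mem_map_of_mem (fun i j => ?_), ?_⟩
  · simp only [map_div₀, map_sub, _root_.map_mul, Complex.conj_conj, Complex.conj_I, map_ofNat]
    have hI := Complex.I_ne_zero
    field_simp
    ring
  · funext i j
    simp only [mulI, LinearMap.coe_mk, AddHom.coe_mk, Pi.smul_apply, Pi.add_apply, smul_eq_mul]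
    have hI : Complex.I ≠ 0 := Complex.I_ne_zero
    field_simp
    ring
  
lemma herm_inf_mulI : herm n ⊓ (herm n).map (mulI n) = ⊥ := by
  rw [Submodule.eq_bot_iff]
  rintro M ⟨hM, K, hK, rfl⟩
  have h0 : ∀ i j, K i j = 0 := by
    intro i j
    have h1 := hM j i
    simp only [mulI, LinearMap.coe_mk, AddHom.coe_mk, Pi.smul_apply, smul_eq_mul,
      _root_.map_mul, Complex.conj_I] at h1
    have h2 : (starRingEnd ℂ) (K j i) = K i j := (hK j i).symm
    rw [h2] at h1
    have h3 : (2 * Complex.I) * K i j = 0 := by linear_combination h1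
    rcases mul_eq_zero.mp h3 with h | h
    · exact absurd h (by simp [Complex.I_ne_zero])
    · exact h
  funext i j
  simp [mulI, h0 i j]

lemma finrank_fun_fun : Module.finrank ℝ (n → n → ℂ) = Fintype.card n * (Fintype.card n * 2) := by
  have h1 : Module.finrank ℝ (n → ℂ) = Fintype.card n * 2 := by
    rw [Module.finrank_pi_fintype ℝ]
    simp [Complex.finrank_real_complex, Finset.sum_const, mul_comm]
  rw [Module.finrank_pi_fintype ℝ]
  simp [h1, Finset.sum_const, mul_comm]

lemma finrank_herm : Module.finrank ℝ (herm n) = Fintype.card n * Fintype.card n := by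
  have h1 := Submodule.finrank_sup_add_finrank_inf_eq (herm n) ((herm n).map (mulI n))
  rw [herm_sup_mulI, herm_inf_mulI] at h1
  have h2 : Module.finrank ℝ ((herm n).map (mulI n)) = Module.finrank ℝ (herm n) :=
    (LinearEquiv.finrank_eq (Submodule.equivMapOfInjective (mulI n) mulI_inj (herm n))).symm
  rw [h2, finrank_top, finrank_bot, finrank_fun_fun] at h1
  have h3 : Fintype.card n * (Fintype.card n * 2) =
      Fintype.card n * Fintype.card n + Fintype.card n * Fintype.card n := by ring
  omega

/-! ### Compactness of convex hull of a compact set in finite dimensions -/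

theorem isCompact_convexHull {E : Type*} [NormedAddCommGroup E] [NormedSpace ℝ E]
    [FiniteDimensional ℝ E] {K : Set E} (hK : IsCompact K) : IsCompact (convexHull ℝ K) := by
  classical
  rcases K.eq_empty_or_nonempty with rfl | ⟨k₀, hk₀⟩
  · simpa [convexHull_empty] using isCompact_empty
  set m : ℕ := Module.finrank ℝ E + 1 with hm
  have himage : convexHull ℝ K =
      (fun wz : (Fin m → ℝ) × (Fin m → E) => ∑ i, wz.1 i • wz.2 i) ''
        (stdSimplex ℝ (Fin m) ×ˢ Set.univ.pi fun _ : Fin m => K) := by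
    apply Set.Subset.antisymm
    · intro x hx
      obtain ⟨ι, hft, z, w, hz, hai, hw0, hw1, hx⟩ := eq_pos_convex_span_of_mem_convexHull hx
      have hne : Nonempty ι := by
        by_contra h
        rw [not_nonempty_iff] at h
        rw [Finset.sum_eq_zero (fun i _ => absurd (IsEmpty.false i) not_false)] at hw1
        exact one_ne_zero hw1.symm
      have hcard : Fintype.card ι ≤ m := by
        have := hai.finrank_vectorSpan_add_one
        have hle : Module.finrank ℝ (vectorSpan ℝ (Set.range z)) ≤ Module.finrank ℝ E :=
          Submodule.finrank_le _
        omega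
      obtain ⟨e⟩ : Nonempty (ι ↪ Fin m) := by
        have : Fintype.card ι ≤ Fintype.card (Fin m) := by simpa using hcard
        exact Function.Embedding.nonempty_of_card_le this
      set w' : Fin m → ℝ := fun j => if h : ∃ i, e i = j then w h.choose else 0 with hw'
      set z' : Fin m → E := fun j => if h : ∃ i, e i = j then z h.choose else k₀ with hz'
      have hkey : ∀ i : ι, ∀ h : ∃ i', e i' = e i, h.choose = i := fun i h =>
        e.injective h.choose_spec
      have hw'e : ∀ i, w' (e i) = w i := by
        intro i
        have h : ∃ i', e i' = e i := ⟨i, rfl⟩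
        simp only [hw', dif_pos h, hkey i h]
      have hz'e : ∀ i, z' (e i) = z i := by
        intro i
        have h : ∃ i', e i' = e i := ⟨i, rfl⟩
        simp only [hz', dif_pos h, hkey i h]
      have hsub : Finset.univ.map e ⊆ Finset.univ := Finset.subset_univ _
      have hout : ∀ j ∈ (Finset.univ : Finset (Fin m)), j ∉ Finset.univ.map e → w' j = 0 := by
        intro j _ hj
        have hno : ¬ ∃ i, e i = j := by
          rintro ⟨i, rfl⟩
          exact hj (Finset.mem_map.mpr ⟨i, Finset.mem_univ _, rfl⟩)
        simp only [hw', dif_neg hno]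
      refine ⟨(w', z'), ⟨⟨fun j => ?_, ?_⟩, fun j _ => ?_⟩, ?_⟩
      · by_cases h : ∃ i, e i = j
        · simp only [hw', dif_pos h]; exact (hw0 _).le
        · simp only [hw', dif_neg h]; exact le_refl 0
      · rw [← Finset.sum_subset hsub (fun j _ hj => hout j (Finset.mem_univ _) hj)]
        rw [Finset.sum_map]
        simpa only [hw'e] using hw1
      · by_cases h : ∃ i, e i = j
        · simp only [hz', dif_pos h]; exact hz (Set.mem_range_self _)
        · simp only [hz', dif_neg h]; exact hk₀
      · show ∑ j, w' j • z' j = x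
        rw [← Finset.sum_subset hsub (fun j _ hj => by rw [hout j (Finset.mem_univ _) hj, zero_smul])]
        rw [Finset.sum_map]
        simp only [Function.Embedding.coeFn_mk, hw'e, hz'e]
        exact hx
    · rintro x ⟨⟨w, z⟩, ⟨⟨hw0, hw1⟩, hzK⟩, rfl⟩
      exact (convex_convexHull ℝ K).sum_mem (fun i _ => hw0 i) hw1
        (fun i _ => subset_convexHull ℝ K (hzK i (Set.mem_univ i)))
  rw [himage]
  refine IsCompact.image ?_ ?_
  · exact (isCompact_stdSimplex (𝕜 := ℝ) (ι := Fin m)).prod (isCompact_univ_pi fun _ => hK)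
  · refine continuous_finset_sum _ fun i _ => ?_
    exact ((continuous_apply i).comp continuous_fst).smul ((continuous_apply i).comp continuous_snd)

end Stmt11Aux
namespace Stmt11Aux

variable {d : ℕ}

/-- trace out the first factor -/
noncomputable def TL (d : ℕ) :
    ((Fin d × Fin d) → (Fin d × Fin d) → ℂ) →ₗ[ℝ] (Fin d → Fin d → ℂ) where
  toFun M := fun i j => ∑ a, M (a, i) (a, j)
  map_add' M N := by funext i j; simp [Finset.sum_add_distrib]
  map_smul' r M := by funext i j; simp [Finset.smul_sum]

/-- trace out the second factor -/
noncomputable def TR (d : ℕ) :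
    ((Fin d × Fin d) → (Fin d × Fin d) → ℂ) →ₗ[ℝ] (Fin d → Fin d → ℂ) where
  toFun M := fun a b => ∑ i, M (a, i) (b, i)
  map_add' M N := by funext a b; simp [Finset.sum_add_distrib]
  map_smul' r M := by funext a b; simp [Finset.smul_sum]

noncomputable def Tmap (d : ℕ) :
    ((Fin d × Fin d) → (Fin d × Fin d) → ℂ) →ₗ[ℝ] ((Fin d → Fin d → ℂ) × (Fin d → Fin d → ℂ)) :=
  (TL d).prod (TR d)

noncomputable def trdiff (d : ℕ) : ((Fin d → Fin d → ℂ) × (Fin d → Fin d → ℂ)) →ₗ[ℝ] ℝ :=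
  Complex.reLm.comp
    { toFun := fun p => (∑ i, p.1 i i) - (∑ i, p.2 i i)
      map_add' := fun p q => by simp [Finset.sum_add_distrib]; ring
      map_smul' := fun r p => by
        show (∑ i, (r • p).1 i i) - (∑ i, (r • p).2 i i) =
          (RingHom.id ℝ) r • ((∑ i, p.1 i i) - (∑ i, p.2 i i))
        simp [Finset.smul_sum, smul_sub] }

/-- the subspace of homogeneous constraints -/
noncomputable def VE (d : ℕ) : Submodule ℝ ((Fin d × Fin d) → (Fin d × Fin d) → ℂ) :=
  herm (Fin d × Fin d) ⊓ LinearMap.ker (Tmap d)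

noncomputable def Wsub (d : ℕ) : Submodule ℝ ((Fin d → Fin d → ℂ) × (Fin d → Fin d → ℂ)) :=
  (herm (Fin d)).prod (herm (Fin d)) ⊓ LinearMap.ker (trdiff d)

/-- product of submodules is linearly equivalent to the product of the pieces -/
noncomputable def prodSubEquiv {R M N : Type*} [CommRing R] [AddCommGroup M] [AddCommGroup N]
    [Module R M] [Module R N] (p : Submodule R M) (q : Submodule R N) :
    (p.prod q) ≃ₗ[R] (p × q) where
  toFun x := (⟨x.1.1, x.2.1⟩, ⟨x.1.2, x.2.2⟩)
  invFun y := ⟨(y.1.1, y.2.1), ⟨y.1.2, y.2.2⟩⟩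
  map_add' x y := rfl
  map_smul' r x := rfl
  left_inv x := rfl
  right_inv y := rfl

lemma finrank_F : Module.finrank ℝ ((Fin d → Fin d → ℂ) × (Fin d → Fin d → ℂ)) =
    2 * (d * (d * 2)) := by
  rw [Module.finrank_prod, finrank_fun_fun]
  simp [two_mul]

lemma finrank_Wsub (hd : 0 < d) : d * d + d * d ≤ Module.finrank ℝ (Wsub d) + 1 := by
  have h1 := Submodule.finrank_sup_add_finrank_inf_eq
    ((herm (Fin d)).prod (herm (Fin d))) (LinearMap.ker (trdiff d))
  have hprod : Module.finrank ℝ ((herm (Fin d)).prod (herm (Fin d))) = d * d + d * d := by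
    rw [LinearEquiv.finrank_eq (prodSubEquiv (herm (Fin d)) (herm (Fin d))),
      Module.finrank_prod, finrank_herm]
    simp
  have hker : Module.finrank ℝ (LinearMap.range (trdiff d)) +
      Module.finrank ℝ (LinearMap.ker (trdiff d)) = 2 * (d * (d * 2)) := by
    rw [LinearMap.finrank_range_add_finrank_ker, finrank_F]
  have hrange : Module.finrank ℝ (LinearMap.range (trdiff d)) ≤ 1 := by
    have h := Submodule.finrank_le (LinearMap.range (trdiff d))
    simpa [Module.finrank_self] using h
  have hsup : Module.finrank ℝ
      ↥((herm (Fin d)).prod (herm (Fin d)) ⊔ LinearMap.ker (trdiff d)) ≤ 2 * (d * (d * 2)) := by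
    have h := Submodule.finrank_le
      ((herm (Fin d)).prod (herm (Fin d)) ⊔ LinearMap.ker (trdiff d))
    rwa [finrank_F] at h
  rw [hprod] at h1
  unfold Wsub
  omega

/-- The explicit preimage showing that `Wsub ≤ range (Tmap restricted to herm)`. -/
noncomputable def mkM (d : ℕ) (A B : Fin d → Fin d → ℂ) :
    (Fin d × Fin d) → (Fin d × Fin d) → ℂ := fun p q =>
  (if p.1 = q.1 then A p.2 q.2 / (d : ℂ) else 0) +
  (if p.2 = q.2 then B p.1 q.1 / (d : ℂ) else 0) -
  (if p = q then (∑ i, A i i) / ((d : ℂ) ^ 2) else 0)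

lemma mkM_herm {A B : Fin d → Fin d → ℂ} (hA : A ∈ herm (Fin d)) (hB : B ∈ herm (Fin d)) :
    mkM d A B ∈ herm (Fin d × Fin d) := by
  intro p q
  have htr := herm_diag_conj hA
  show mkM d A B q p = (starRingEnd ℂ) (mkM d A B p q)
  unfold mkM
  rw [map_sub, map_add]
  congr 1
  · congr 1
    · rcases eq_or_ne p.1 q.1 with h | h
      · rw [if_pos h.symm, if_pos h, map_div₀, Complex.conj_natCast, hA p.2 q.2]
      · rw [if_neg (Ne.symm h), if_neg h, map_zero]
    · rcases eq_or_ne p.2 q.2 with h | h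
      · rw [if_pos h.symm, if_pos h, map_div₀, Complex.conj_natCast, hB p.1 q.1]
      · rw [if_neg (Ne.symm h), if_neg h, map_zero]
  · rcases eq_or_ne p q with h | h
    · rw [if_pos h.symm, if_pos h, map_div₀, htr, map_pow, Complex.conj_natCast]
    · rw [if_neg (Ne.symm h), if_neg h, map_zero]

lemma TL_mkM (hd : 0 < d) {A B : Fin d → Fin d → ℂ}
    (htr : (∑ i, A i i) = ∑ i, B i i) : TL d (mkM d A B) = A := by
  have hc : (d : ℂ) ≠ 0 := Nat.cast_ne_zero.mpr hd.ne'
  funext i j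
  show (∑ a, mkM d A B (a, i) (a, j)) = A i j
  rcases eq_or_ne i j with h | h
  · subst h
    have hexp : ∀ a : Fin d, mkM d A B (a, i) (a, i) =
        A i i / (d : ℂ) + B a a / (d : ℂ) - (∑ k, A k k) / (d : ℂ) ^ 2 := by
      intro a; unfold mkM; simp
    rw [Finset.sum_congr rfl fun a _ => hexp a]
    rw [Finset.sum_sub_distrib, Finset.sum_add_distrib]
    simp only [div_eq_mul_inv, ← Finset.sum_mul, Finset.sum_const, Finset.card_univ,
      Fintype.card_fin, nsmul_eq_mul]
    rw [htr]
    field_simp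
    ring
  · have hexp : ∀ a : Fin d, mkM d A B (a, i) (a, j) = A i j / (d : ℂ) := by
      intro a; unfold mkM
      have h2 : ¬ (((a, i) : Fin d × Fin d) = (a, j)) := fun hh => h (congrArg Prod.snd hh)
      simp [h, h2]
    rw [Finset.sum_congr rfl fun a _ => hexp a]
    simp only [Finset.sum_const, Finset.card_univ, Fintype.card_fin, nsmul_eq_mul]
    field_simp

lemma TR_mkM (hd : 0 < d) {A B : Fin d → Fin d → ℂ} :
    TR d (mkM d A B) = B := by
  have hc : (d : ℂ) ≠ 0 := Nat.cast_ne_zero.mpr hd.ne'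
  funext a b
  show (∑ i, mkM d A B (a, i) (b, i)) = B a b
  rcases eq_or_ne a b with h | h
  · subst h
    have hexp : ∀ i : Fin d, mkM d A B (a, i) (a, i) =
        A i i / (d : ℂ) + B a a / (d : ℂ) - (∑ k, A k k) / (d : ℂ) ^ 2 := by
      intro i; unfold mkM; simp
    rw [Finset.sum_congr rfl fun i _ => hexp i]
    rw [Finset.sum_sub_distrib, Finset.sum_add_distrib]
    simp only [div_eq_mul_inv, ← Finset.sum_mul, Finset.sum_const, Finset.card_univ,
      Fintype.card_fin, nsmul_eq_mul]
    field_simp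
    ring
  · have hexp : ∀ i : Fin d, mkM d A B (a, i) (b, i) = B a b / (d : ℂ) := by
      intro i; unfold mkM
      have h2 : ¬ (((a, i) : Fin d × Fin d) = (b, i)) := fun hh => h (congrArg Prod.fst hh)
      simp [h, h2]
    rw [Finset.sum_congr rfl fun i _ => hexp i]
    simp only [Finset.sum_const, Finset.card_univ, Fintype.card_fin, nsmul_eq_mul]
    field_simp

lemma finrank_VE_le : Module.finrank ℝ (VE d) + 2 * (d * d) ≤ d * d * (d * d) + 1 := by
  rcases Nat.eq_zero_or_pos d with rfl | hd
  · have h := Submodule.finrank_le (VE 0)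
    rw [finrank_fun_fun] at h
    simp only [Fintype.card_prod, Fintype.card_fin] at h
    omega
  classical
  set T' := (Tmap d).comp (herm (Fin d × Fin d)).subtype with hT'
  have hrn := LinearMap.finrank_range_add_finrank_ker T'
  have hH2 : Module.finrank ℝ (herm (Fin d × Fin d)) = d * d * (d * d) := by
    rw [finrank_herm]; simp
  -- VE = map of ker T'
  have hVE : Submodule.map (herm (Fin d × Fin d)).subtype (LinearMap.ker T') = VE d := by
    rw [hT', LinearMap.ker_comp, Submodule.map_comap_subtype]
    rfl
  have hfVE : Module.finrank ℝ (VE d) = Module.finrank ℝ (LinearMap.ker T') := by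
    rw [← hVE]
    exact (LinearEquiv.finrank_eq (Submodule.equivMapOfInjective _
      (Submodule.injective_subtype _) _)).symm
  -- Wsub ≤ range T'
  have hWle : Wsub d ≤ LinearMap.range T' := by
    rintro ⟨A, B⟩ ⟨⟨hA, hB⟩, hker⟩
    have htrR : (starRingEnd ℂ) (∑ i, A i i) = ∑ i, A i i := herm_diag_conj hA
    have htrB : (starRingEnd ℂ) (∑ i, B i i) = ∑ i, B i i := herm_diag_conj hB
    have hre : ((∑ i, A i i) - ∑ i, B i i).re = 0 := by
      have := LinearMap.mem_ker.mp hker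
      simpa [trdiff, Complex.sub_re] using this
    have htr : (∑ i, A i i) = ∑ i, B i i := by
      have hA0 : (∑ i, A i i).im = 0 := Complex.conj_eq_iff_im.mp htrR
      have hB0 : (∑ i, B i i).im = 0 := Complex.conj_eq_iff_im.mp htrB
      apply Complex.ext
      · have : (∑ i, A i i).re - (∑ i, B i i).re = 0 := by
          simpa [Complex.sub_re] using hre
        linarith
      · rw [hA0, hB0]
    refine ⟨⟨mkM d A B, mkM_herm hA hB⟩, ?_⟩
    show Tmap d (mkM d A B) = (A, B)
    unfold Tmap
    rw [LinearMap.prod_apply]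
    exact Prod.ext (TL_mkM hd htr) (TR_mkM hd)
  have hWr : Module.finrank ℝ (Wsub d) ≤ Module.finrank ℝ (LinearMap.range T') :=
    Submodule.finrank_mono hWle
  have hW := finrank_Wsub hd
  rw [hH2] at hrn
  rw [hfVE]
  omega

end Stmt11Aux
namespace Stmt11Aux

variable {d : ℕ}

noncomputable def g (d : ℕ) (U : Matrix.unitaryGroup (Fin d) ℂ) :
    (Fin d × Fin d) → (Fin d × Fin d) → ℂ := fun p q =>
  (U : Matrix (Fin d) (Fin d) ℂ) p.1 p.2 * (starRingEnd ℂ) ((U : Matrix (Fin d) (Fin d) ℂ) q.1 q.2)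

lemma g_herm (U : Matrix.unitaryGroup (Fin d) ℂ) : g d U ∈ herm (Fin d × Fin d) := fun p q => by
  simp only [g, _root_.map_mul, Complex.conj_conj]
  ring

lemma TL_g (U : Matrix.unitaryGroup (Fin d) ℂ) :
    TL d (g d U) = fun i j => if i = j then (1 : ℂ) else 0 := by
  funext i j
  show (∑ a, (U : Matrix (Fin d) (Fin d) ℂ) a i *
      (starRingEnd ℂ) ((U : Matrix (Fin d) (Fin d) ℂ) a j)) = _
  have h : star (U : Matrix (Fin d) (Fin d) ℂ) * (U : Matrix (Fin d) (Fin d) ℂ) = 1 :=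
    (Unitary.mem_iff.mp U.2).1
  have h2 : (star (U : Matrix (Fin d) (Fin d) ℂ) * (U : Matrix (Fin d) (Fin d) ℂ)) j i
      = (1 : Matrix (Fin d) (Fin d) ℂ) j i := by rw [h]
  rw [Matrix.mul_apply] at h2
  simp only [Matrix.star_apply, Complex.star_def] at h2
  rw [Matrix.one_apply] at h2
  calc (∑ a, (U : Matrix (Fin d) (Fin d) ℂ) a i *
      (starRingEnd ℂ) ((U : Matrix (Fin d) (Fin d) ℂ) a j))
      = ∑ a, (starRingEnd ℂ) ((U : Matrix (Fin d) (Fin d) ℂ) a j) *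
        (U : Matrix (Fin d) (Fin d) ℂ) a i := by
        exact Finset.sum_congr rfl fun a _ => mul_comm _ _
    _ = if j = i then 1 else 0 := h2
    _ = if i = j then 1 else 0 := by simp [eq_comm]

lemma TR_g (U : Matrix.unitaryGroup (Fin d) ℂ) :
    TR d (g d U) = fun a b => if a = b then (1 : ℂ) else 0 := by
  funext a b
  show (∑ i, (U : Matrix (Fin d) (Fin d) ℂ) a i *
      (starRingEnd ℂ) ((U : Matrix (Fin d) (Fin d) ℂ) b i)) = _
  have h : (U : Matrix (Fin d) (Fin d) ℂ) * star (U : Matrix (Fin d) (Fin d) ℂ) = 1 :=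
    (Unitary.mem_iff.mp U.2).2
  have h2 : ((U : Matrix (Fin d) (Fin d) ℂ) * star (U : Matrix (Fin d) (Fin d) ℂ)) a b
      = (1 : Matrix (Fin d) (Fin d) ℂ) a b := by rw [h]
  rw [Matrix.mul_apply] at h2
  simp only [Matrix.star_apply, Complex.star_def] at h2
  rw [Matrix.one_apply] at h2
  exact h2

lemma Tmap_g (U : Matrix.unitaryGroup (Fin d) ℂ) :
    Tmap d (g d U) = (fun i j => if i = j then (1 : ℂ) else 0,
      fun a b => if a = b then (1 : ℂ) else 0) := by
  have h1 := TL_g U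
  have h2 := TR_g U
  show (TL d (g d U), TR d (g d U)) = _
  rw [h1, h2]

lemma g_cont : Continuous (g d) := by
  apply continuous_pi; intro p; apply continuous_pi; intro q
  have hU : Continuous (fun U : Matrix.unitaryGroup (Fin d) ℂ =>
      (U : Matrix (Fin d) (Fin d) ℂ)) := continuous_subtype_val
  exact (hU.matrix_elem p.1 p.2).mul (Complex.continuous_conj.comp (hU.matrix_elem q.1 q.2))

lemma isCompact_unitaryGroup :
    IsCompact ((Matrix.unitaryGroup (Fin d) ℂ : Set (Matrix (Fin d) (Fin d) ℂ))) := by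
  have hsub : (Matrix.unitaryGroup (Fin d) ℂ : Set (Matrix (Fin d) (Fin d) ℂ)) ⊆
      Set.univ.pi fun _ : Fin d => Set.univ.pi fun _ : Fin d => Metric.closedBall (0 : ℂ) 1 := by
    intro M hM a _ i _
    simp only [Metric.mem_closedBall, dist_zero_right]
    have h1 : star M * M = 1 := (Unitary.mem_iff.mp hM).1
    have h2 : (star M * M) i i = (1 : Matrix (Fin d) (Fin d) ℂ) i i := by rw [h1]
    rw [Matrix.mul_apply, Matrix.one_apply_eq] at h2
    have h3 : ∑ b, (Complex.normSq (M b i) : ℝ) = 1 := by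
      have h4 : ∀ b, (star M) i b * M b i = (Complex.normSq (M b i) : ℂ) := by
        intro b
        rw [Matrix.star_apply, Complex.star_def, Complex.normSq_eq_conj_mul_self]
      rw [Finset.sum_congr rfl fun b _ => h4 b] at h2
      have := congrArg Complex.re h2
      simpa [Complex.ofReal_sum] using this
    have h5 : Complex.normSq (M a i) ≤ 1 := by
      rw [← h3]
      exact Finset.single_le_sum (fun b _ => Complex.normSq_nonneg (M b i)) (Finset.mem_univ a)
    have h6 : ‖M a i‖ ^ 2 ≤ 1 := by
      rw [← Complex.normSq_eq_norm_sq]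
      exact h5
    nlinarith [norm_nonneg (M a i)]
  refine IsCompact.of_isClosed_subset
    (isCompact_univ_pi fun _ => isCompact_univ_pi fun _ => isCompact_closedBall 0 1) ?_ hsub
  have heq : (Matrix.unitaryGroup (Fin d) ℂ : Set (Matrix (Fin d) (Fin d) ℂ)) =
      (fun M : Matrix (Fin d) (Fin d) ℂ => (star M * M, M * star M)) ⁻¹'
        {((1 : Matrix (Fin d) (Fin d) ℂ), (1 : Matrix (Fin d) (Fin d) ℂ))} := by
    ext M
    simp only [Set.mem_preimage, Set.mem_singleton_iff, Prod.mk.injEq, SetLike.mem_coe,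
      Unitary.mem_iff]
  rw [heq]
  exact IsClosed.preimage
    ((continuous_star.matrix_mul continuous_id).prodMk
      (continuous_id.matrix_mul continuous_star)) isClosed_singleton

instance : CompactSpace (Matrix.unitaryGroup (Fin d) ℂ) :=
  isCompact_iff_compactSpace.mp isCompact_unitaryGroup

instance : BorelSpace (Matrix (Fin d) (Fin d) ℂ) :=
  inferInstanceAs (BorelSpace (Fin d → Fin d → ℂ))

instance : OpensMeasurableSpace (Matrix.unitaryGroup (Fin d) ℂ) :=
  Subtype.opensMeasurableSpace
    ((Matrix.unitaryGroup (Fin d) ℂ : Set (Matrix (Fin d) (Fin d) ℂ)))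

end Stmt11Aux
theorem stmt11 (d : ℕ) (ν : Measure (Matrix.unitaryGroup (Fin d) ℂ))
    [IsProbabilityMeasure ν] :
    ∃ N : ℕ, N ≤ d ^ 4 - 2 * d ^ 2 + 2 ∧
      ∃ (p : Fin N → ℝ) (U : Fin N → Matrix.unitaryGroup (Fin d) ℂ),
        (∀ i, 0 ≤ p i) ∧ (∑ i, p i) = 1 ∧
        ∀ (X : Matrix (Fin d) (Fin d) ℂ) (a b : Fin d),
          (∫ V, ((V : Matrix (Fin d) (Fin d) ℂ) * X * star (V : Matrix (Fin d) (Fin d) ℂ)) a b ∂ν)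
            = ∑ i, (p i : ℂ) * (((U i : Matrix (Fin d) (Fin d) ℂ) * X * star (U i : Matrix (Fin d) (Fin d) ℂ)) a b) := by
  classical
  have hg_cont : Continuous (Stmt11Aux.g d) := Stmt11Aux.g_cont
  have hint : Integrable (Stmt11Aux.g d) ν := by
    apply hg_cont.integrable_of_hasCompactSupport
    exact IsCompact.of_isClosed_subset isCompact_univ (isClosed_tsupport _) (Set.subset_univ _)
  set Mbar : (Fin d × Fin d) → (Fin d × Fin d) → ℂ := ∫ V, Stmt11Aux.g d V ∂ν with hMbar
  have hmem : Mbar ∈ convexHull ℝ (Set.range (Stmt11Aux.g d)) := by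
    refine Convex.integral_mem (convex_convexHull ℝ _) ?_ ?_ hint
    · exact (Stmt11Aux.isCompact_convexHull (isCompact_range hg_cont)).isClosed
    · exact Filter.Eventually.of_forall fun U => subset_convexHull ℝ _ ⟨U, rfl⟩
  obtain ⟨ι, hft, z, w, hz, hai, hw0, hw1, hxx⟩ := eq_pos_convex_span_of_mem_convexHull hmem
  have hzU : ∀ i : ι, ∃ U, Stmt11Aux.g d U = z i := fun i => hz (Set.mem_range_self i)
  have hne : Nonempty ι := by
    by_contra h
    rw [not_nonempty_iff] at h
    rw [Finset.sum_eq_zero (fun i _ => absurd (IsEmpty.false i) not_false)] at hw1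
    exact one_ne_zero hw1.symm
  -- the affine span is contained in the constraint space
  have hspan : vectorSpan ℝ (Set.range z) ≤ Stmt11Aux.VE d := by
    rw [vectorSpan_def, Submodule.span_le]
    rintro x ⟨u, hu, v, hv, rfl⟩
    obtain ⟨U1, hU1⟩ := hz hu
    obtain ⟨U2, hU2⟩ := hz hv
    show u - v ∈ Stmt11Aux.VE d
    rw [← hU1, ← hU2]
    refine Submodule.mem_inf.mpr ⟨?_, ?_⟩
    · exact Submodule.sub_mem _ (Stmt11Aux.g_herm U1) (Stmt11Aux.g_herm U2)
    · rw [LinearMap.mem_ker, map_sub, Stmt11Aux.Tmap_g, Stmt11Aux.Tmap_g, sub_self]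
  have hcard : Fintype.card ι ≤ d ^ 4 - 2 * d ^ 2 + 2 := by
    have h1 := hai.finrank_vectorSpan_add_one
    have h2 : Module.finrank ℝ (vectorSpan ℝ (Set.range z)) ≤
        Module.finrank ℝ (Stmt11Aux.VE d) := Submodule.finrank_mono hspan
    have h3 := Stmt11Aux.finrank_VE_le (d := d)
    have h4 : d ^ 4 = d * d * (d * d) := by ring
    have h5 : d ^ 2 = d * d := by ring
    rw [h4, h5]
    omega
  set e : Fin (Fintype.card ι) ≃ ι := (Fintype.equivFin ι).symm with he
  set Ufun : Fin (Fintype.card ι) → Matrix.unitaryGroup (Fin d) ℂ :=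
    fun k => (hzU (e k)).choose with hUfun'
  have hUfun : ∀ k, Stmt11Aux.g d (Ufun k) = z (e k) := fun k => (hzU (e k)).choose_spec
  refine ⟨Fintype.card ι, hcard, fun k => w (e k), Ufun, fun k => (hw0 _).le, ?_, ?_⟩
  · rw [Equiv.sum_comp e w]; exact hw1
  · intro X a b
    -- the entrywise formula as a linear functional
    set L : ((Fin d × Fin d) → (Fin d × Fin d) → ℂ) →ₗ[ℝ] ℂ :=
      { toFun := fun M => ∑ i, ∑ j, M (a, i) (b, j) * X i j
        map_add' := fun M N => by simp [add_mul, Finset.sum_add_distrib]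
        map_smul' := fun r M => by simp [Finset.smul_sum, smul_mul_assoc, mul_assoc] } with hL
    have hentry : ∀ V : Matrix (Fin d) (Fin d) ℂ,
        (V * X * star V) a b = ∑ i, ∑ j, (V a i * (starRingEnd ℂ) (V b j)) * X i j := by
      intro V
      simp only [Matrix.mul_apply, Matrix.star_apply, Complex.star_def, Finset.sum_mul]
      rw [Finset.sum_comm]
      exact Finset.sum_congr rfl fun i _ => Finset.sum_congr rfl fun j _ => by ring
    have hentry' : ∀ V : Matrix.unitaryGroup (Fin d) ℂ,
        ((V : Matrix (Fin d) (Fin d) ℂ) * X * star (V : Matrix (Fin d) (Fin d) ℂ)) a b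
          = L (Stmt11Aux.g d V) := by
      intro V
      rw [hentry]
      rfl
    have hcomm := (LinearMap.toContinuousLinearMap L).integral_comp_comm hint
    calc (∫ V, ((V : Matrix (Fin d) (Fin d) ℂ) * X *
            star (V : Matrix (Fin d) (Fin d) ℂ)) a b ∂ν)
        = ∫ V, (LinearMap.toContinuousLinearMap L) (Stmt11Aux.g d V) ∂ν := by
          exact integral_congr_ae (Filter.Eventually.of_forall fun V => hentry' V)
      _ = L Mbar := hcomm
      _ = L (∑ k : Fin (Fintype.card ι), w (e k) • Stmt11Aux.g d (Ufun k)) := by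
          congr 1
          rw [← hxx, ← Equiv.sum_comp e (fun i => w i • z i)]
          exact Finset.sum_congr rfl fun k _ => by rw [hUfun k]
      _ = ∑ k : Fin (Fintype.card ι), w (e k) • L (Stmt11Aux.g d (Ufun k)) := by
          rw [map_sum]
          exact Finset.sum_congr rfl fun k _ => by rw [_root_.map_smul]
      _ = ∑ k : Fin (Fintype.card ι), ((w (e k) : ℂ)) *
            (((Ufun k : Matrix (Fin d) (Fin d) ℂ) * X *
              star (Ufun k : Matrix (Fin d) (Fin d) ℂ)) a b) := by
          refine Finset.sum_congr rfl fun k _ => ?_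
          rw [hentry' (Ufun k), Complex.real_smul]
end
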